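/- Let {f_i}_{i∈I} be a frame for H and {ω_j}_{j∈I} a Riesz sequence in H such that {ω_j} is an R-dual of type I of {f_i} with respect to some orthonormal bases {e_j}, {h_i}. Then dim(ker T) = dim((span{ω_j})⊥), where T is the synthesis operator of {f_i}. -/

import Mathlib

open scoped InnerProductSpace
open TopologicalSpace
open scoped ENNReal

/-- A surjective conjugate-linear "isometry" between complex Hilbert spaces yields a
(linear) isometric isomorphism. -/
private lemma conj_iso {V W : Type*} [NormedAddCommGroup V] [InnerProductSpace ℂ V]
    [CompleteSpace V] [NormedAddCommGroup W] [InnerProductSpace ℂ W] [CompleteSpace W]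
    (Φ : V → W)
    (hadd : ∀ x y, Φ (x + y) = Φ x + Φ y)
    (hsmul : ∀ (c : ℂ) x, Φ (c • x) = (starRingEnd ℂ) c • Φ x)
    (hinner : ∀ x y, ⟪Φ x, Φ y⟫_ℂ = (starRingEnd ℂ) ⟪x, y⟫_ℂ)
    (hsurj : Function.Surjective Φ) : Nonempty (V ≃ₗᵢ[ℂ] W) := by
  classical
  obtain ⟨w, b, hb⟩ := exists_hilbertBasis ℂ V
  have hzero : Φ 0 = 0 := by
    have h0 := hadd 0 0
    rw [add_zero] at h0
    exact (left_eq_add.mp h0)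
  have hsub : ∀ x y, Φ (x - y) = Φ x - Φ y := by
    intro x y
    have h1 : Φ (x + (-1 : ℂ) • y) = Φ x + (starRingEnd ℂ) (-1 : ℂ) • Φ y := by
      rw [hadd, hsmul]
    simpa [sub_eq_add_neg] using h1
  have hnorm : ∀ x, ‖Φ x‖ = ‖x‖ := by
    intro x
    have h1 : ⟪Φ x, Φ x⟫_ℂ = ⟪x, x⟫_ℂ := by
      rw [hinner, inner_conj_symm]
    have h2 : ‖Φ x‖ * ‖Φ x‖ = ‖x‖ * ‖x‖ := by
      rw [← @inner_self_eq_norm_mul_norm ℂ, ← @inner_self_eq_norm_mul_norm ℂ, h1]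
    nlinarith [norm_nonneg (Φ x), norm_nonneg x]
  have hiso : Isometry Φ := Isometry.of_dist_eq fun x y => by
    rw [dist_eq_norm, dist_eq_norm, ← hsub, hnorm]
  have horth : Orthonormal ℂ (fun i : w => Φ (b i)) := by
    rw [orthonormal_iff_ite]
    intro i j
    rw [hinner, orthonormal_iff_ite.mp b.orthonormal i j]
    split <;> simp
  have hd : ⊤ ≤ (Submodule.span ℂ (Set.range fun i : w => Φ (b i))).topologicalClosure := by
    intro z _
    obtain ⟨v, rfl⟩ := hsurj z
    have hv : v ∈ closure (Submodule.span ℂ (Set.range b) : Set V) := by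
      rw [← Submodule.topologicalClosure_coe, b.dense_span]
      trivial
    have hmaps : Set.MapsTo Φ (Submodule.span ℂ (Set.range b) : Set V)
        (Submodule.span ℂ (Set.range fun i : w => Φ (b i)) : Set W) := by
      intro u hu
      induction hu using Submodule.span_induction with
      | mem x hx =>
          obtain ⟨i, rfl⟩ := hx
          exact Submodule.subset_span ⟨i, rfl⟩
      | zero => rw [hzero]; exact Submodule.zero_mem _
      | add x y hx hy ihx ihy => rw [hadd]; exact Submodule.add_mem _ ihx ihy
      | smul a x hx ih => rw [hsmul]; exact Submodule.smul_mem _ _ ih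
    rw [← SetLike.mem_coe, Submodule.topologicalClosure_coe]
    exact map_mem_closure hiso.continuous hv hmaps
  let B := HilbertBasis.mk horth hd
  exact ⟨b.repr.trans B.repr.symm⟩

/-- If `{f i}` is a frame with synthesis operator `T` and `{ω j}` is a Riesz
sequence which is an R-dual of type I of `{f i}` (w.r.t. orthonormal bases `{e j}`,
`{h i}`), then `dim (ker T) = dim ((span {ω j})⊥)`: the two Hilbert spaces are
isometrically isomorphic. -/
theorem stmt13 {H : Type*} {I : Type*} [NormedAddCommGroup H] [InnerProductSpace ℂ H]
    [CompleteSpace H] [SeparableSpace H] [Countable I]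
    (e h : HilbertBasis I ℂ H) (f ω : I → H) (A B C D : ℝ) (hA : 0 < A) (hC : 0 < C)
    (hsum : ∀ g : H, Summable fun i => ‖⟪f i, g⟫_ℂ‖ ^ 2)
    (hframe : ∀ g : H, A * ‖g‖ ^ 2 ≤ ∑' i, ‖⟪f i, g⟫_ℂ‖ ^ 2 ∧
      ∑' i, ‖⟪f i, g⟫_ℂ‖ ^ 2 ≤ B * ‖g‖ ^ 2)
    (hRiesz : ∀ (s : Finset I) (c : I → ℂ),
      C * ∑ j ∈ s, ‖c j‖ ^ 2 ≤ ‖∑ j ∈ s, c j • ω j‖ ^ 2 ∧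
      ‖∑ j ∈ s, c j • ω j‖ ^ 2 ≤ D * ∑ j ∈ s, ‖c j‖ ^ 2)
    (T : lp (fun _ : I => ℂ) 2 →L[ℂ] H)
    (hT : ∀ c, T c = ∑' i, c i • f i)
    (hω : ∀ j, ω j = ∑' i, ⟪e j, f i⟫_ℂ • h i) :
    Nonempty (↥(LinearMap.ker (T : lp (fun _ : I => ℂ) 2 →ₗ[ℂ] H)) ≃ₗᵢ[ℂ] ↥(Submodule.span ℂ (Set.range ω))ᗮ) := by
  classical
  set O : Submodule ℂ H := Submodule.span ℂ (Set.range ω) with hO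
  -- the synthesis series converges for every `c ∈ ℓ²`
  have hTsum : ∀ c : lp (fun _ : I => ℂ) 2, HasSum (fun i => c i • f i) (T c) := by
    intro c
    have h1 : HasSum (fun i => lp.single 2 i (c i)) c :=
      lp.hasSum_single ENNReal.ofNat_ne_top c
    have h2 := h1.mapL T
    have heq : ∀ i, T (lp.single 2 i (c i)) = c i • f i := by
      intro i
      have h3 : lp.single 2 i (c i) = c i • (lp.single 2 i (1 : ℂ) : lp (fun _ : I => ℂ) 2) := by
        rw [← lp.single_smul]
        norm_num
      rw [h3, map_smul]
      congr 1
      rw [hT, tsum_eq_single i]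
      · simp [lp.single_apply_self]
      · intro j hj
        simp [lp.single_apply_ne 2 i _ hj, Pi.single_apply, hj]
    simpa only [heq] using h2
  -- the series defining `ω j` converges
  have hωsum : ∀ j, HasSum (fun i => ⟪e j, f i⟫_ℂ • h i) (ω j) := by
    intro j
    have hmem : Memℓp (fun i => ⟪e j, f i⟫_ℂ) 2 := by
      apply memℓp_gen
      have h4 := hsum (e j)
      have h5 : ∀ i, ‖⟪e j, f i⟫_ℂ‖ ^ (2 : ℝ≥0∞).toReal = ‖⟪f i, e j⟫_ℂ‖ ^ 2 := by
        intro i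
        rw [norm_inner_symm]
        norm_num
      simpa only [h5] using h4
    set a : lp (fun _ : I => ℂ) 2 := ⟨fun i => ⟪e j, f i⟫_ℂ, hmem⟩ with ha
    have h4 := h.hasSum_repr_symm a
    have hai : ∀ i : I, (a : ∀ _ : I, ℂ) i = ⟪e j, f i⟫_ℂ := fun i => rfl
    have h5 : ω j = h.repr.symm a := by
      rw [hω j]
      simpa only [hai] using h4.tsum_eq
    rw [h5]
    simpa only [hai] using h4
  -- key equivalence
  have key : ∀ g : H, g ∈ Oᗮ ↔ T (star (h.repr g)) = 0 := by
    intro g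
    have hinnerT : ∀ j, ⟪e j, T (star (h.repr g))⟫_ℂ = ⟪g, ω j⟫_ℂ := by
      intro j
      have h6 := (hTsum (star (h.repr g))).mapL (innerSL ℂ (e j))
      have h7 := (hωsum j).mapL (innerSL ℂ g)
      have hterm : ∀ i, (innerSL ℂ g) (⟪e j, f i⟫_ℂ • h i)
          = (innerSL ℂ (e j)) ((star (h.repr g) : lp (fun _ : I => ℂ) 2) i • f i) := by
        intro i
        simp only [innerSL_apply_apply, inner_smul_right, lp.star_apply, h.repr_apply_apply,
          Complex.star_def]
        rw [← inner_conj_symm g (h i)]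
        ring
      have h7' : HasSum
          (fun i => (innerSL ℂ (e j)) ((star (h.repr g) : lp (fun _ : I => ℂ) 2) i • f i))
          (⟪g, ω j⟫_ℂ) := by
        rw [← innerSL_apply_apply]
        simpa only [hterm] using h7
      exact h6.unique h7'
    constructor
    · intro hg
      have hz : ∀ j, ⟪e j, T (star (h.repr g))⟫_ℂ = 0 := by
        intro j
        rw [hinnerT j]
        exact (Submodule.mem_orthogonal' O g).mp hg (ω j) (Submodule.subset_span ⟨j, rfl⟩)
      have h8 : e.repr (T (star (h.repr g))) = 0 := by
        apply lp.ext
        funext j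
        rw [e.repr_apply_apply]
        simpa using hz j
      exact e.repr.injective (by rw [h8, map_zero])
    · intro hT0
      rw [Submodule.mem_orthogonal']
      intro u hu
      rw [hO] at hu
      induction hu using Submodule.span_induction with
      | mem x hx =>
          obtain ⟨j, rfl⟩ := hx
          rw [← hinnerT j, hT0, inner_zero_right]
      | zero => exact inner_zero_right g
      | add x y hx hy ihx ihy => rw [inner_add_right, ihx, ihy, add_zero]
      | smul a x hx ih => rw [inner_smul_right, ih, mul_zero]
  -- star preserves inner up to conjugation on `ℓ²`
  have hstar_inner : ∀ (a b : lp (fun _ : I => ℂ) 2),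
      ⟪star a, star b⟫_ℂ = (starRingEnd ℂ) ⟪a, b⟫_ℂ := by
    intro a b
    rw [lp.inner_eq_tsum, lp.inner_eq_tsum]
    rw [show (starRingEnd ℂ) (∑' i, ⟪(a : ∀ _ : I, ℂ) i, (b : ∀ _ : I, ℂ) i⟫_ℂ)
        = star (∑' i, ⟪(a : ∀ _ : I, ℂ) i, (b : ∀ _ : I, ℂ) i⟫_ℂ) from rfl]
    rw [tsum_star]
    congr 1
    funext i
    simp only [lp.star_apply, RCLike.inner_apply, Complex.star_def, map_mul,
      Complex.conj_conj]
  haveI : CompleteSpace (LinearMap.ker (T : lp (fun _ : I => ℂ) 2 →ₗ[ℂ] H)) :=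
    (ContinuousLinearMap.isClosed_ker T).completeSpace_coe
  refine conj_iso
    (fun c => ⟨h.repr.symm (star (c : lp (fun _ : I => ℂ) 2)), ?_⟩) ?_ ?_ ?_ ?_
  · -- membership
    apply (key _).mpr
    rw [LinearIsometryEquiv.apply_symm_apply, star_star]
    simpa using c.2
  · intro x y
    apply Subtype.ext
    simp [star_add]
  · intro c x
    apply Subtype.ext
    simp [star_smul, Complex.star_def]
  · intro x y
    rw [Submodule.coe_inner, Submodule.coe_inner]
    rw [LinearIsometryEquiv.inner_map_map]
    exact hstar_inner _ _
  · intro y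
    have hy : T (star (h.repr (y : H))) = 0 := (key (y : H)).mp y.2
    refine ⟨⟨star (h.repr (y : H)), by simpa using hy⟩, ?_⟩
    apply Subtype.ext
    simp
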